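/- Let $U \subseteq \mathbb{C}^n$ and $V \subseteq \mathbb{C}^m$ be bounded domains. The set of strongly regular points of $\partial(U \times V)$ is closed (in $\partial(U \times V)$) if and only if the set of strongly regular points of $\partial U$ is closed in $\partial U$ and the set of strongly regular points of $\partial V$ is closed in $\partial V$. -/

import Mathlib

open Set Metric MeasureTheory Complex

def SubharmonicOn (u : ℂ → ℝ) (s : Set ℂ) : Prop :=
  UpperSemicontinuousOn u s ∧ ∀ c : ℂ, ∀ r : ℝ, 0 < r → closedBall c r ⊆ s →
    u c ≤ (2 * Real.pi)⁻¹ * ∫ θ in (0:ℝ)..(2 * Real.pi),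
      u (c + (r : ℂ) * Complex.exp (θ * Complex.I))

def PSHOn {E : Type*} [NormedAddCommGroup E] [NormedSpace ℂ E]
    (u : E → ℝ) (s : Set E) : Prop :=
  UpperSemicontinuousOn u s ∧
    ∀ a b : E, SubharmonicOn (fun t : ℂ => u (a + t • b)) {t : ℂ | a + t • b ∈ s}

/-- A boundary point is strongly regular if it admits a continuous plurisubharmonic
peak function. -/
def StronglyRegular {E : Type*} [NormedAddCommGroup E] [NormedSpace ℂ E]
    (D : Set E) (x₀ : E) : Prop :=
  x₀ ∈ frontier D ∧ ∃ u : E → ℝ, ContinuousOn u (closure D) ∧ PSHOn u D ∧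
    u x₀ = 0 ∧ ∀ x ∈ closure D \ {x₀}, u x < 0

-- circle point in closed ball
lemma circle_mem_closedBall (c : ℂ) {r : ℝ} (hr : 0 < r) (θ : ℝ) :
    c + (r : ℂ) * Complex.exp (θ * Complex.I) ∈ closedBall c r := by
  simp only [Metric.mem_closedBall, dist_eq_norm]
  have : c + (r:ℂ) * Complex.exp (θ * Complex.I) - c = (r:ℂ) * Complex.exp (θ * Complex.I) := by
    ring
  rw [this]
  rw [norm_mul, Complex.norm_exp_ofReal_mul_I,
    mul_one, Complex.norm_real, Real.norm_eq_abs, abs_of_pos hr]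

lemma continuous_circleMap' (c : ℂ) (r : ℝ) :
    Continuous (fun θ : ℝ => c + (r : ℂ) * Complex.exp (θ * Complex.I)) := by
  continuity

lemma SubharmonicOn.mono {u : ℂ → ℝ} {s t : Set ℂ} (h : SubharmonicOn u s) (hts : t ⊆ s) :
    SubharmonicOn u t :=
  ⟨h.1.mono hts, fun c r hr hball => h.2 c r hr (hball.trans hts)⟩

lemma SubharmonicOn.add' {u v : ℂ → ℝ} {s : Set ℂ} (hu : SubharmonicOn u s)
    (hv : SubharmonicOn v s) (hcu : ContinuousOn u s) (hcv : ContinuousOn v s) :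
    SubharmonicOn (fun t => u t + v t) s := by
  refine ⟨(hcu.add hcv).upperSemicontinuousOn, fun c r hr hball => ?_⟩
  have hmem : ∀ θ : ℝ, c + (r : ℂ) * Complex.exp (θ * Complex.I) ∈ s := fun θ =>
    hball (circle_mem_closedBall c hr θ)
  have hiu : IntervalIntegrable (fun θ : ℝ => u (c + (r : ℂ) * Complex.exp (θ * Complex.I)))
      MeasureTheory.volume 0 (2 * Real.pi) :=
    (hcu.comp_continuous (continuous_circleMap' c r) hmem).intervalIntegrable _ _
  have hiv : IntervalIntegrable (fun θ : ℝ => v (c + (r : ℂ) * Complex.exp (θ * Complex.I)))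
      MeasureTheory.volume 0 (2 * Real.pi) :=
    (hcv.comp_continuous (continuous_circleMap' c r) hmem).intervalIntegrable _ _
  rw [intervalIntegral.integral_add hiu hiv, mul_add]
  exact add_le_add (hu.2 c r hr hball) (hv.2 c r hr hball)

/-- Real part of an affine map is (sub)harmonic. -/
lemma subharmonicOn_re_affine (α β : ℂ) (C : ℝ) (s : Set ℂ) :
    SubharmonicOn (fun t => (α + t * β).re - C) s := by
  refine ⟨((Complex.continuous_re.comp (continuous_const.add
      (continuous_id.mul continuous_const))).sub continuous_const).continuousOn.upperSemicontinuousOn,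
    fun c r hr _ => ?_⟩
  have key : ∀ θ : ℝ, (α + (c + (r:ℂ) * Complex.exp (θ * Complex.I)) * β).re - C
      = ((α + c * β).re - C) + (r * β.re) * Real.cos θ + (-(r * β.im)) * Real.sin θ := by
    intro θ
    simp [Complex.exp_mul_I, Complex.add_re, Complex.mul_re, Complex.mul_im,
      Complex.add_im, Complex.cos_ofReal_re, Complex.sin_ofReal_re,
      Complex.cos_ofReal_im, Complex.sin_ofReal_im]
    ring
  have h1 : (∫ θ in (0:ℝ)..(2 * Real.pi),
      ((α + (c + (r:ℂ) * Complex.exp (θ * Complex.I)) * β).re - C))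
      = ((α + c * β).re - C) * (2 * Real.pi) := by
    rw [intervalIntegral.integral_congr (g := fun θ =>
      ((α + c * β).re - C) + (r * β.re) * Real.cos θ + (-(r * β.im)) * Real.sin θ)
      (fun θ _ => key θ)]
    rw [intervalIntegral.integral_add
        (f := fun θ => ((α + c * β).re - C) + (r * β.re) * Real.cos θ)
        (g := fun θ => (-(r * β.im)) * Real.sin θ) (by
        exact ((continuous_const.add (continuous_const.mul Real.continuous_cos))).intervalIntegrable _ _)
      ((continuous_const.mul Real.continuous_sin).intervalIntegrable _ _),
      intervalIntegral.integral_add (f := fun _ => (α + c * β).re - C)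
        (g := fun θ => (r * β.re) * Real.cos θ) (intervalIntegrable_const)
        ((continuous_const.mul Real.continuous_cos).intervalIntegrable _ _),
      intervalIntegral.integral_const, intervalIntegral.integral_const_mul,
      intervalIntegral.integral_const_mul, integral_cos, integral_sin]
    simp [Real.sin_two_pi, Real.cos_two_pi]
    ring
  rw [h1]
  have h2 : (2 * Real.pi)⁻¹ * (((α + c * β).re - C) * (2 * Real.pi)) = (α + c * β).re - C := by
    field_simp
  rw [h2]

section Prod

variable {E F : Type*} [NormedAddCommGroup E] [NormedSpace ℂ E]
  [NormedAddCommGroup F] [NormedSpace ℂ F]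

/-- The sum of peak functions gives a PSH function on the product. -/
lemma pshOn_prod_add {u : E → ℝ} {v : F → ℝ} {U : Set E} {V : Set F}
    (hu : PSHOn u U) (hv : PSHOn v V)
    (hcu : ContinuousOn u U) (hcv : ContinuousOn v V) :
    PSHOn (fun z : E × F => u z.1 + v z.2) (U ×ˢ V) := by
  constructor
  · exact ((hcu.comp continuous_fst.continuousOn (fun z hz => hz.1)).add
      (hcv.comp continuous_snd.continuousOn (fun z hz => hz.2))).upperSemicontinuousOn
  · intro a b
    have hset : {t : ℂ | a + t • b ∈ U ×ˢ V}
        = {t : ℂ | a.1 + t • b.1 ∈ U} ∩ {t : ℂ | a.2 + t • b.2 ∈ V} := rfl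
    have h1 : SubharmonicOn (fun t : ℂ => u (a.1 + t • b.1)) {t : ℂ | a + t • b ∈ U ×ˢ V} :=
      (hu.2 a.1 b.1).mono (by rw [hset]; exact inter_subset_left)
    have h2 : SubharmonicOn (fun t : ℂ => v (a.2 + t • b.2)) {t : ℂ | a + t • b ∈ U ×ˢ V} :=
      (hv.2 a.2 b.2).mono (by rw [hset]; exact inter_subset_right)
    have hc1 : ContinuousOn (fun t : ℂ => u (a.1 + t • b.1)) {t : ℂ | a + t • b ∈ U ×ˢ V} :=
      hcu.comp (Continuous.continuousOn (by fun_prop)) (fun t ht => ht.1)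
    have hc2 : ContinuousOn (fun t : ℂ => v (a.2 + t • b.2)) {t : ℂ | a + t • b ∈ U ×ˢ V} :=
      hcv.comp (Continuous.continuousOn (by fun_prop)) (fun t ht => ht.2)
    exact h1.add' h2 hc1 hc2

/-- If both coordinates are strongly regular, so is the product point. -/
lemma stronglyRegular_prod {U : Set E} {V : Set F} {p : E} {q : F}
    (hp : StronglyRegular U p) (hq : StronglyRegular V q) :
    StronglyRegular (U ×ˢ V) (p, q) := by
  obtain ⟨hpf, u, hcu, hpu, hu0, hun⟩ := hp
  obtain ⟨hqf, v, hcv, hpv, hv0, hvn⟩ := hq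
  refine ⟨?_, fun z => u z.1 + v z.2, ?_, ?_, by simp [hu0, hv0], ?_⟩
  · rw [frontier_prod_eq]
    exact Or.inr ⟨hpf, hqf.1⟩
  · rw [closure_prod_eq]
    exact (hcu.comp continuous_fst.continuousOn (fun z hz => hz.1)).add
      (hcv.comp continuous_snd.continuousOn (fun z hz => hz.2))
  · exact pshOn_prod_add hpu hpv (hcu.mono subset_closure) (hcv.mono subset_closure)
  · rintro ⟨x, y⟩ ⟨hz, hne⟩
    rw [closure_prod_eq] at hz
    have hxu : u x ≤ 0 := by
      rcases eq_or_ne x p with rfl | hx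
      · exact le_of_eq hu0
      · exact (hun x ⟨hz.1, hx⟩).le
    have hyv : v y ≤ 0 := by
      rcases eq_or_ne y q with rfl | hy
      · exact le_of_eq hv0
      · exact (hvn y ⟨hz.2, hy⟩).le
    rcases eq_or_ne x p with rfl | hx
    · have hy : y ≠ q := fun h => hne (by rw [h]; exact Set.mem_singleton _)
      have := hvn y ⟨hz.2, hy⟩
      simp only
      linarith
    · have := hun x ⟨hz.1, hx⟩
      simp only
      linarith

end Prod

lemma SubharmonicOn.congr' {f g : ℂ → ℝ} {s s' : Set ℂ} (h : SubharmonicOn f s)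
    (hfg : ∀ t, f t = g t) (hs : s = s') : SubharmonicOn g s' := by
  have hfg' : f = g := funext hfg
  rw [← hfg', ← hs]
  exact h

section Restrict

variable {n m : ℕ} {U : Set (Fin n → ℂ)} {V : Set (Fin m → ℂ)}

/-- Restriction of a product peak function to a horizontal slice. -/
lemma stronglyRegular_left (hUb : Bornology.IsBounded U) (hVb : Bornology.IsBounded V)
    {p : Fin n → ℂ} {q : Fin m → ℂ} (hp : p ∈ frontier U) (hq : q ∈ closure V)
    (h : StronglyRegular (U ×ˢ V) (p, q)) : StronglyRegular U p := by
  obtain ⟨-, w, hcw, hpw, hw0, hwn⟩ := h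
  have hclpr : closure (U ×ˢ V) = closure U ×ˢ closure V := closure_prod_eq
  obtain ⟨M, hM⟩ : ∃ M, ∀ z ∈ closure (U ×ˢ V), ‖w z‖ ≤ M :=
    ((hUb.prod hVb).isCompact_closure).exists_bound_of_continuousOn hcw
  obtain ⟨y, hyV, hylim⟩ := mem_closure_iff_seq_limit.1 hq
  -- the restricted function
  set u' : (Fin n → ℂ) → ℝ := fun x => w (x, q) with hu'def
  have hmemcl : ∀ x ∈ closure U, ∀ z ∈ closure V, (x, z) ∈ closure (U ×ˢ V) := by
    intro x hx z hz; rw [hclpr]; exact ⟨hx, hz⟩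
  have hcu' : ContinuousOn u' (closure U) :=
    hcw.comp (Continuous.continuousOn (by fun_prop)) (fun x hx => hmemcl x hx q hq)
  refine ⟨hp, u', hcu', ⟨(hcu'.mono subset_closure).upperSemicontinuousOn, ?_⟩, hw0, ?_⟩
  · intro a b
    constructor
    · have haff : Continuous (fun t : ℂ => a + t • b) := by fun_prop
      have : ContinuousOn (u' ∘ fun t : ℂ => a + t • b) {t : ℂ | a + t • b ∈ U} :=
        (hcu'.mono subset_closure).comp haff.continuousOn (fun t ht => ht)
      exact this.upperSemicontinuousOn
    · intro c r hr hball
      -- the inequality for each approximating point y j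
      have hj : ∀ j, w (a + c • b, y j) ≤ (2 * Real.pi)⁻¹ * ∫ θ in (0:ℝ)..(2 * Real.pi),
          w (a + (c + (r:ℂ) * Complex.exp (θ * Complex.I)) • b, y j) := by
        intro j
        have hsub := (hpw.2 (a, y j) (b, 0)).congr'
          (g := fun t : ℂ => w (a + t • b, y j)) (s' := {t : ℂ | a + t • b ∈ U})
          (fun t => by
            show w ((a, y j) + t • (b, 0)) = _
            have : (a, y j) + t • ((b, 0) : (Fin n → ℂ) × (Fin m → ℂ)) = (a + t • b, y j) := by
              simp [Prod.ext_iff]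
            rw [this])
          (by ext t;
              simp only [Set.mem_setOf_eq, Prod.smul_mk, Prod.mk_add_mk, smul_zero, add_zero,
                Set.prodMk_mem_set_prod_eq]
              exact and_iff_left (hyV j))
        exact hsub.2 c r hr hball
      have hcU : a + c • b ∈ U := hball (by simp [hr.le])
      -- circle points are in U
      have hcirc : ∀ θ : ℝ, a + (c + (r:ℂ) * Complex.exp (θ * Complex.I)) • b ∈ U :=
        fun θ => hball (circle_mem_closedBall c hr θ)
      -- convergence of left-hand sides
      have T1 : Filter.Tendsto (fun j => w (a + c • b, y j)) Filter.atTop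
          (nhds (w (a + c • b, q))) := by
        have hcwAt := hcw (a + c • b, q) (hmemcl _ (subset_closure hcU) q hq)
        refine hcwAt.tendsto.comp ?_
        rw [tendsto_nhdsWithin_iff]
        exact ⟨(tendsto_const_nhds.prodMk_nhds hylim),
          Filter.Eventually.of_forall fun j =>
            hmemcl _ (subset_closure hcU) _ (subset_closure (hyV j))⟩
      -- convergence of the integrals
      have T2 : Filter.Tendsto (fun j => ∫ θ in (0:ℝ)..(2 * Real.pi),
          w (a + (c + (r:ℂ) * Complex.exp (θ * Complex.I)) • b, y j)) Filter.atTop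
          (nhds (∫ θ in (0:ℝ)..(2 * Real.pi),
            w (a + (c + (r:ℂ) * Complex.exp (θ * Complex.I)) • b, q))) := by
        apply intervalIntegral.tendsto_integral_filter_of_dominated_convergence
          (bound := fun _ => M)
        · refine Filter.Eventually.of_forall fun j => ?_
          have : Continuous (fun θ : ℝ =>
              w (a + (c + (r:ℂ) * Complex.exp (θ * Complex.I)) • b, y j)) := by
            apply hcw.comp_continuous (by fun_prop)
            intro θ
            exact hmemcl _ (subset_closure (hcirc θ)) _ (subset_closure (hyV j))
          exact this.aestronglyMeasurable.restrict
        · refine Filter.Eventually.of_forall fun j => Filter.Eventually.of_forall fun θ _ => ?_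
          exact hM _ (hmemcl _ (subset_closure (hcirc θ)) _ (subset_closure (hyV j)))
        · exact intervalIntegrable_const
        · refine Filter.Eventually.of_forall fun θ _ => ?_
          have hcwAt := hcw (a + (c + (r:ℂ) * Complex.exp (θ * Complex.I)) • b, q)
            (hmemcl _ (subset_closure (hcirc θ)) q hq)
          refine hcwAt.tendsto.comp ?_
          rw [tendsto_nhdsWithin_iff]
          exact ⟨(tendsto_const_nhds.prodMk_nhds hylim),
            Filter.Eventually.of_forall fun j =>
              hmemcl _ (subset_closure (hcirc θ)) _ (subset_closure (hyV j))⟩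
      exact le_of_tendsto_of_tendsto' T1 (T2.const_mul _) hj
  · intro x hx
    have : (x, q) ∈ closure (U ×ˢ V) \ {(p, q)} := by
      refine ⟨hmemcl x hx.1 q hq, ?_⟩
      simp only [Set.mem_singleton_iff, Prod.mk.injEq, not_and]
      intro hxp; exact absurd hxp hx.2
    exact hwn _ this

end Restrict

section Restrict2

variable {n m : ℕ} {U : Set (Fin n → ℂ)} {V : Set (Fin m → ℂ)}

lemma stronglyRegular_right (hUb : Bornology.IsBounded U) (hVb : Bornology.IsBounded V)
    {p : Fin n → ℂ} {q : Fin m → ℂ} (hp : p ∈ closure U) (hq : q ∈ frontier V)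
    (h : StronglyRegular (U ×ˢ V) (p, q)) : StronglyRegular V q := by
  obtain ⟨-, w, hcw, hpw, hw0, hwn⟩ := h
  have hclpr : closure (U ×ˢ V) = closure U ×ˢ closure V := closure_prod_eq
  obtain ⟨M, hM⟩ : ∃ M, ∀ z ∈ closure (U ×ˢ V), ‖w z‖ ≤ M :=
    ((hUb.prod hVb).isCompact_closure).exists_bound_of_continuousOn hcw
  obtain ⟨y, hyU, hylim⟩ := mem_closure_iff_seq_limit.1 hp
  set v' : (Fin m → ℂ) → ℝ := fun z => w (p, z) with hv'def
  have hmemcl : ∀ x ∈ closure U, ∀ z ∈ closure V, (x, z) ∈ closure (U ×ˢ V) := by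
    intro x hx z hz; rw [hclpr]; exact ⟨hx, hz⟩
  have hcv' : ContinuousOn v' (closure V) :=
    hcw.comp (Continuous.continuousOn (by fun_prop)) (fun z hz => hmemcl p hp z hz)
  refine ⟨hq, v', hcv', ⟨(hcv'.mono subset_closure).upperSemicontinuousOn, ?_⟩, hw0, ?_⟩
  · intro a b
    constructor
    · have haff : Continuous (fun t : ℂ => a + t • b) := by fun_prop
      have : ContinuousOn (v' ∘ fun t : ℂ => a + t • b) {t : ℂ | a + t • b ∈ V} :=
        (hcv'.mono subset_closure).comp haff.continuousOn (fun t ht => ht)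
      exact this.upperSemicontinuousOn
    · intro c r hr hball
      have hj : ∀ j, w (y j, a + c • b) ≤ (2 * Real.pi)⁻¹ * ∫ θ in (0:ℝ)..(2 * Real.pi),
          w (y j, a + (c + (r:ℂ) * Complex.exp (θ * Complex.I)) • b) := by
        intro j
        have hsub := (hpw.2 (y j, a) (0, b)).congr'
          (g := fun t : ℂ => w (y j, a + t • b)) (s' := {t : ℂ | a + t • b ∈ V})
          (fun t => by
            show w ((y j, a) + t • (0, b)) = _
            have : (y j, a) + t • ((0, b) : (Fin n → ℂ) × (Fin m → ℂ)) = (y j, a + t • b) := by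
              simp [Prod.ext_iff]
            rw [this])
          (by ext t
              simp only [Set.mem_setOf_eq, Prod.smul_mk, Prod.mk_add_mk, smul_zero, add_zero,
                Set.prodMk_mem_set_prod_eq]
              exact and_iff_right (hyU j))
        exact hsub.2 c r hr hball
      have hcV : a + c • b ∈ V := hball (by simp [hr.le])
      have hcirc : ∀ θ : ℝ, a + (c + (r:ℂ) * Complex.exp (θ * Complex.I)) • b ∈ V :=
        fun θ => hball (circle_mem_closedBall c hr θ)
      have T1 : Filter.Tendsto (fun j => w (y j, a + c • b)) Filter.atTop
          (nhds (w (p, a + c • b))) := by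
        have hcwAt := hcw (p, a + c • b) (hmemcl p hp _ (subset_closure hcV))
        refine hcwAt.tendsto.comp ?_
        rw [tendsto_nhdsWithin_iff]
        exact ⟨(hylim.prodMk_nhds tendsto_const_nhds),
          Filter.Eventually.of_forall fun j =>
            hmemcl _ (subset_closure (hyU j)) _ (subset_closure hcV)⟩
      have T2 : Filter.Tendsto (fun j => ∫ θ in (0:ℝ)..(2 * Real.pi),
          w (y j, a + (c + (r:ℂ) * Complex.exp (θ * Complex.I)) • b)) Filter.atTop
          (nhds (∫ θ in (0:ℝ)..(2 * Real.pi),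
            w (p, a + (c + (r:ℂ) * Complex.exp (θ * Complex.I)) • b))) := by
        apply intervalIntegral.tendsto_integral_filter_of_dominated_convergence
          (bound := fun _ => M)
        · refine Filter.Eventually.of_forall fun j => ?_
          have : Continuous (fun θ : ℝ =>
              w (y j, a + (c + (r:ℂ) * Complex.exp (θ * Complex.I)) • b)) := by
            apply hcw.comp_continuous (by fun_prop)
            intro θ
            exact hmemcl _ (subset_closure (hyU j)) _ (subset_closure (hcirc θ))
          exact this.aestronglyMeasurable.restrict
        · refine Filter.Eventually.of_forall fun j => Filter.Eventually.of_forall fun θ _ => ?_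
          exact hM _ (hmemcl _ (subset_closure (hyU j)) _ (subset_closure (hcirc θ)))
        · exact intervalIntegrable_const
        · refine Filter.Eventually.of_forall fun θ _ => ?_
          have hcwAt := hcw (p, a + (c + (r:ℂ) * Complex.exp (θ * Complex.I)) • b)
            (hmemcl p hp _ (subset_closure (hcirc θ)))
          refine hcwAt.tendsto.comp ?_
          rw [tendsto_nhdsWithin_iff]
          exact ⟨(hylim.prodMk_nhds tendsto_const_nhds),
            Filter.Eventually.of_forall fun j =>
              hmemcl _ (subset_closure (hyU j)) _ (subset_closure (hcirc θ))⟩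
      exact le_of_tendsto_of_tendsto' T1 (T2.const_mul _) hj
  · intro z hz
    have : (p, z) ∈ closure (U ×ˢ V) \ {(p, q)} := by
      refine ⟨hmemcl p hp z hz.1, ?_⟩
      simp only [Set.mem_singleton_iff, Prod.mk.injEq, not_and]
      intro _; exact hz.2
    exact hwn _ this

end Restrict2

section Mixed

variable {n m : ℕ} {U : Set (Fin n → ℂ)} {V : Set (Fin m → ℂ)}

/-- A point of `∂(U×V)` whose second coordinate is interior to `V` is not strongly
regular (provided `m ≥ 1`). -/
lemma not_stronglyRegular_mixed_left (hUb : Bornology.IsBounded U)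
    (hVb : Bornology.IsBounded V) (hm : 0 < m) (hVo : IsOpen V)
    {p : Fin n → ℂ} {q : Fin m → ℂ} (hq : q ∈ V) :
    ¬ StronglyRegular (U ×ˢ V) (p, q) := by
  rintro ⟨hfr, w, hcw, hpw, hw0, hwn⟩
  have hclpr : closure (U ×ˢ V) = closure U ×ˢ closure V := closure_prod_eq
  have hmemcl : ∀ x ∈ closure U, ∀ z ∈ closure V, (x, z) ∈ closure (U ×ˢ V) := by
    intro x hx z hz; rw [hclpr]; exact ⟨hx, hz⟩
  have hpcl : p ∈ closure U := by
    have := frontier_subset_closure hfr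
    rw [hclpr] at this; exact this.1
  obtain ⟨ε, hε, hballV⟩ := Metric.isOpen_iff.1 hVo q hq
  set ρ : ℝ := ε / 2 with hρdef
  have hρ : 0 < ρ := by positivity
  have hballV' : closedBall q ρ ⊆ V :=
    (closedBall_subset_ball (by simp [hρdef]; linarith)).trans hballV
  set b : Fin m → ℂ := fun _ => (ρ : ℂ) with hbdef
  have hbnorm : ‖b‖ ≤ ρ := by
    rw [pi_norm_le_iff_of_nonneg hρ.le]
    intro i; simp [hbdef, abs_of_pos hρ]
  have hbne : b ≠ 0 := by
    intro h
    have := congrFun h ⟨0, hm⟩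
    simp [hbdef] at this
    exact hρ.ne' this
  have hdisk : ∀ t : ℂ, t ∈ closedBall (0:ℂ) 1 → q + t • b ∈ V := by
    intro t ht
    apply hballV'
    rw [Metric.mem_closedBall] at ht ⊢
    have : dist (q + t • b) q = ‖t • b‖ := by
      rw [dist_eq_norm]; congr 1; abel
    rw [this, norm_smul]
    calc ‖t‖ * ‖b‖ ≤ 1 * ρ := by
          apply mul_le_mul _ hbnorm (norm_nonneg _) zero_le_one
          simpa using ht
      _ = ρ := one_mul ρ
  obtain ⟨M, hM⟩ : ∃ M, ∀ z ∈ closure (U ×ˢ V), ‖w z‖ ≤ M :=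
    ((hUb.prod hVb).isCompact_closure).exists_bound_of_continuousOn hcw
  obtain ⟨y, hyU, hylim⟩ := mem_closure_iff_seq_limit.1 hpcl
  -- sub-mean-value at each (y j, q)
  have hj : ∀ j, w (y j, q + (0:ℂ) • b) ≤ (2 * Real.pi)⁻¹ * ∫ θ in (0:ℝ)..(2 * Real.pi),
      w (y j, q + ((0:ℂ) + ((1:ℝ):ℂ) * Complex.exp (θ * Complex.I)) • b) := by
    intro j
    have hsub := (hpw.2 (y j, q) (0, b)).congr'
      (g := fun t : ℂ => w (y j, q + t • b)) (s' := {t : ℂ | q + t • b ∈ V})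
      (fun t => by
        show w ((y j, q) + t • (0, b)) = _
        have : (y j, q) + t • ((0, b) : (Fin n → ℂ) × (Fin m → ℂ)) = (y j, q + t • b) := by
          simp [Prod.ext_iff]
        rw [this])
      (by ext t
          simp only [Set.mem_setOf_eq, Prod.smul_mk, Prod.mk_add_mk, smul_zero, add_zero,
            Set.prodMk_mem_set_prod_eq]
          exact and_iff_right (hyU j))
    exact hsub.2 0 1 one_pos (fun t ht => hdisk t ht)
  have hcircV : ∀ θ : ℝ, q + ((0:ℂ) + ((1:ℝ):ℂ) * Complex.exp (θ * Complex.I)) • b ∈ V := by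
    intro θ
    apply hdisk
    have := circle_mem_closedBall (0:ℂ) one_pos θ
    simpa using this
  -- limits
  have T1 : Filter.Tendsto (fun j => w (y j, q + (0:ℂ) • b)) Filter.atTop
      (nhds (w (p, q + (0:ℂ) • b))) := by
    have hqV : q + (0:ℂ) • b ∈ V := by simpa using hq
    have hcwAt := hcw (p, q + (0:ℂ) • b) (hmemcl p hpcl _ (subset_closure hqV))
    refine hcwAt.tendsto.comp ?_
    rw [tendsto_nhdsWithin_iff]
    exact ⟨(hylim.prodMk_nhds tendsto_const_nhds),
      Filter.Eventually.of_forall fun j =>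
        hmemcl _ (subset_closure (hyU j)) _ (subset_closure hqV)⟩
  have T2 : Filter.Tendsto (fun j => ∫ θ in (0:ℝ)..(2 * Real.pi),
      w (y j, q + ((0:ℂ) + ((1:ℝ):ℂ) * Complex.exp (θ * Complex.I)) • b)) Filter.atTop
      (nhds (∫ θ in (0:ℝ)..(2 * Real.pi),
        w (p, q + ((0:ℂ) + ((1:ℝ):ℂ) * Complex.exp (θ * Complex.I)) • b))) := by
    apply intervalIntegral.tendsto_integral_filter_of_dominated_convergence
      (bound := fun _ => M)
    · refine Filter.Eventually.of_forall fun j => ?_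
      have : Continuous (fun θ : ℝ =>
          w (y j, q + ((0:ℂ) + ((1:ℝ):ℂ) * Complex.exp (θ * Complex.I)) • b)) := by
        apply hcw.comp_continuous (by fun_prop)
        intro θ
        exact hmemcl _ (subset_closure (hyU j)) _ (subset_closure (hcircV θ))
      exact this.aestronglyMeasurable.restrict
    · refine Filter.Eventually.of_forall fun j => Filter.Eventually.of_forall fun θ _ => ?_
      exact hM _ (hmemcl _ (subset_closure (hyU j)) _ (subset_closure (hcircV θ)))
    · exact intervalIntegrable_const
    · refine Filter.Eventually.of_forall fun θ _ => ?_
      have hcwAt := hcw (p, q + ((0:ℂ) + ((1:ℝ):ℂ) * Complex.exp (θ * Complex.I)) • b)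
        (hmemcl p hpcl _ (subset_closure (hcircV θ)))
      refine hcwAt.tendsto.comp ?_
      rw [tendsto_nhdsWithin_iff]
      exact ⟨(hylim.prodMk_nhds tendsto_const_nhds),
        Filter.Eventually.of_forall fun j =>
          hmemcl _ (subset_closure (hyU j)) _ (subset_closure (hcircV θ))⟩
  have hineq : w (p, q + (0:ℂ) • b) ≤ (2 * Real.pi)⁻¹ * ∫ θ in (0:ℝ)..(2 * Real.pi),
      w (p, q + ((0:ℂ) + ((1:ℝ):ℂ) * Complex.exp (θ * Complex.I)) • b) :=
    le_of_tendsto_of_tendsto' T1 (T2.const_mul _) hj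
  have hlhs : w (p, q + (0:ℂ) • b) = 0 := by
    rw [show q + (0:ℂ) • b = q by simp]; exact hw0
  -- the integrand is continuous and strictly negative
  set g : ℝ → ℝ := fun θ =>
    w (p, q + ((0:ℂ) + ((1:ℝ):ℂ) * Complex.exp (θ * Complex.I)) • b) with hgdef
  have hgcont : Continuous g := by
    apply hcw.comp_continuous (by fun_prop)
    intro θ
    exact hmemcl p hpcl _ (subset_closure (hcircV θ))
  have hgneg : ∀ θ, g θ < 0 := by
    intro θ
    apply hwn
    refine ⟨hmemcl p hpcl _ (subset_closure (hcircV θ)), ?_⟩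
    simp only [Set.mem_singleton_iff, Prod.mk.injEq, not_and]
    intro _
    have hexp : ((0:ℂ) + ((1:ℝ):ℂ) * Complex.exp (θ * Complex.I)) ≠ 0 := by
      simpa using Complex.exp_ne_zero (θ * Complex.I)
    have : ((0:ℂ) + ((1:ℝ):ℂ) * Complex.exp (θ * Complex.I)) • b ≠ 0 :=
      smul_ne_zero hexp hbne
    intro habs
    apply this
    have := congrArg (fun z => z - q) habs
    simpa [add_sub_cancel_left] using this
  -- strict negativity of the integral
  obtain ⟨θ₀, hθ₀mem, hθ₀max⟩ :=
    (isCompact_Icc (a := (0:ℝ)) (b := 2 * Real.pi)).exists_isMaxOn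
      (Set.nonempty_Icc.2 (by positivity)) hgcont.continuousOn
  have hInt : (∫ θ in (0:ℝ)..(2 * Real.pi), g θ) ≤ (2 * Real.pi) * g θ₀ := by
    have := intervalIntegral.integral_mono_on (μ := MeasureTheory.volume) (a := (0:ℝ)) (b := 2 * Real.pi)
      (by positivity) (hgcont.intervalIntegrable _ _) (intervalIntegrable_const (c := g θ₀))
      (fun θ hθ => hθ₀max hθ)
    simpa [smul_eq_mul, mul_comm] using this
  have h2π : (0:ℝ) < 2 * Real.pi := by positivity
  have : (2 * Real.pi)⁻¹ * ∫ θ in (0:ℝ)..(2 * Real.pi), g θ ≤ g θ₀ := by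
    calc (2 * Real.pi)⁻¹ * ∫ θ in (0:ℝ)..(2 * Real.pi), g θ
        ≤ (2 * Real.pi)⁻¹ * ((2 * Real.pi) * g θ₀) := by
          apply mul_le_mul_of_nonneg_left hInt (by positivity)
      _ = g θ₀ := by field_simp
  have := hineq
  rw [hlhs] at this
  have hg0 : g θ₀ < 0 := hgneg θ₀
  linarith [this.trans ‹(2 * Real.pi)⁻¹ * ∫ θ in (0:ℝ)..(2 * Real.pi), g θ ≤ g θ₀›]

end Mixed

section Mixed2

variable {n m : ℕ} {U : Set (Fin n → ℂ)} {V : Set (Fin m → ℂ)}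

lemma not_stronglyRegular_mixed_right (hUb : Bornology.IsBounded U)
    (hVb : Bornology.IsBounded V) (hn : 0 < n) (hUo : IsOpen U)
    {p : Fin n → ℂ} {q : Fin m → ℂ} (hp : p ∈ U) :
    ¬ StronglyRegular (U ×ˢ V) (p, q) := by
  rintro ⟨hfr, w, hcw, hpw, hw0, hwn⟩
  have hclpr : closure (U ×ˢ V) = closure U ×ˢ closure V := closure_prod_eq
  have hmemcl : ∀ x ∈ closure U, ∀ z ∈ closure V, (x, z) ∈ closure (U ×ˢ V) := by
    intro x hx z hz; rw [hclpr]; exact ⟨hx, hz⟩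
  have hqcl : q ∈ closure V := by
    have := frontier_subset_closure hfr
    rw [hclpr] at this; exact this.2
  obtain ⟨ε, hε, hballU⟩ := Metric.isOpen_iff.1 hUo p hp
  set ρ : ℝ := ε / 2 with hρdef
  have hρ : 0 < ρ := by positivity
  have hballU' : closedBall p ρ ⊆ U :=
    (closedBall_subset_ball (by simp [hρdef]; linarith)).trans hballU
  set b : Fin n → ℂ := fun _ => (ρ : ℂ) with hbdef
  have hbnorm : ‖b‖ ≤ ρ := by
    rw [pi_norm_le_iff_of_nonneg hρ.le]
    intro i; simp [hbdef, abs_of_pos hρ]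
  have hbne : b ≠ 0 := by
    intro h
    have := congrFun h ⟨0, hn⟩
    simp [hbdef] at this
    exact hρ.ne' this
  have hdisk : ∀ t : ℂ, t ∈ closedBall (0:ℂ) 1 → p + t • b ∈ U := by
    intro t ht
    apply hballU'
    rw [Metric.mem_closedBall] at ht ⊢
    have : dist (p + t • b) p = ‖t • b‖ := by
      rw [dist_eq_norm]; congr 1; abel
    rw [this, norm_smul]
    calc ‖t‖ * ‖b‖ ≤ 1 * ρ := by
          apply mul_le_mul _ hbnorm (norm_nonneg _) zero_le_one
          simpa using ht
      _ = ρ := one_mul ρ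
  obtain ⟨M, hM⟩ : ∃ M, ∀ z ∈ closure (U ×ˢ V), ‖w z‖ ≤ M :=
    ((hUb.prod hVb).isCompact_closure).exists_bound_of_continuousOn hcw
  obtain ⟨y, hyV, hylim⟩ := mem_closure_iff_seq_limit.1 hqcl
  have hj : ∀ j, w (p + (0:ℂ) • b, y j) ≤ (2 * Real.pi)⁻¹ * ∫ θ in (0:ℝ)..(2 * Real.pi),
      w (p + ((0:ℂ) + ((1:ℝ):ℂ) * Complex.exp (θ * Complex.I)) • b, y j) := by
    intro j
    have hsub := (hpw.2 (p, y j) (b, 0)).congr'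
      (g := fun t : ℂ => w (p + t • b, y j)) (s' := {t : ℂ | p + t • b ∈ U})
      (fun t => by
        show w ((p, y j) + t • (b, 0)) = _
        have : (p, y j) + t • ((b, 0) : (Fin n → ℂ) × (Fin m → ℂ)) = (p + t • b, y j) := by
          simp [Prod.ext_iff]
        rw [this])
      (by ext t
          simp only [Set.mem_setOf_eq, Prod.smul_mk, Prod.mk_add_mk, smul_zero, add_zero,
            Set.prodMk_mem_set_prod_eq]
          exact and_iff_left (hyV j))
    exact hsub.2 0 1 one_pos (fun t ht => hdisk t ht)
  have hcircU : ∀ θ : ℝ, p + ((0:ℂ) + ((1:ℝ):ℂ) * Complex.exp (θ * Complex.I)) • b ∈ U := by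
    intro θ
    apply hdisk
    have := circle_mem_closedBall (0:ℂ) one_pos θ
    simpa using this
  have T1 : Filter.Tendsto (fun j => w (p + (0:ℂ) • b, y j)) Filter.atTop
      (nhds (w (p + (0:ℂ) • b, q))) := by
    have hpU : p + (0:ℂ) • b ∈ U := by simpa using hp
    have hcwAt := hcw (p + (0:ℂ) • b, q) (hmemcl _ (subset_closure hpU) q hqcl)
    refine hcwAt.tendsto.comp ?_
    rw [tendsto_nhdsWithin_iff]
    exact ⟨(tendsto_const_nhds.prodMk_nhds hylim),
      Filter.Eventually.of_forall fun j =>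
        hmemcl _ (subset_closure hpU) _ (subset_closure (hyV j))⟩
  have T2 : Filter.Tendsto (fun j => ∫ θ in (0:ℝ)..(2 * Real.pi),
      w (p + ((0:ℂ) + ((1:ℝ):ℂ) * Complex.exp (θ * Complex.I)) • b, y j)) Filter.atTop
      (nhds (∫ θ in (0:ℝ)..(2 * Real.pi),
        w (p + ((0:ℂ) + ((1:ℝ):ℂ) * Complex.exp (θ * Complex.I)) • b, q))) := by
    apply intervalIntegral.tendsto_integral_filter_of_dominated_convergence
      (bound := fun _ => M)
    · refine Filter.Eventually.of_forall fun j => ?_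
      have : Continuous (fun θ : ℝ =>
          w (p + ((0:ℂ) + ((1:ℝ):ℂ) * Complex.exp (θ * Complex.I)) • b, y j)) := by
        apply hcw.comp_continuous (by fun_prop)
        intro θ
        exact hmemcl _ (subset_closure (hcircU θ)) _ (subset_closure (hyV j))
      exact this.aestronglyMeasurable.restrict
    · refine Filter.Eventually.of_forall fun j => Filter.Eventually.of_forall fun θ _ => ?_
      exact hM _ (hmemcl _ (subset_closure (hcircU θ)) _ (subset_closure (hyV j)))
    · exact intervalIntegrable_const
    · refine Filter.Eventually.of_forall fun θ _ => ?_
      have hcwAt := hcw (p + ((0:ℂ) + ((1:ℝ):ℂ) * Complex.exp (θ * Complex.I)) • b, q)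
        (hmemcl _ (subset_closure (hcircU θ)) q hqcl)
      refine hcwAt.tendsto.comp ?_
      rw [tendsto_nhdsWithin_iff]
      exact ⟨(tendsto_const_nhds.prodMk_nhds hylim),
        Filter.Eventually.of_forall fun j =>
          hmemcl _ (subset_closure (hcircU θ)) _ (subset_closure (hyV j))⟩
  have hineq : w (p + (0:ℂ) • b, q) ≤ (2 * Real.pi)⁻¹ * ∫ θ in (0:ℝ)..(2 * Real.pi),
      w (p + ((0:ℂ) + ((1:ℝ):ℂ) * Complex.exp (θ * Complex.I)) • b, q) :=
    le_of_tendsto_of_tendsto' T1 (T2.const_mul _) hj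
  have hlhs : w (p + (0:ℂ) • b, q) = 0 := by
    rw [show p + (0:ℂ) • b = p by simp]; exact hw0
  set g : ℝ → ℝ := fun θ =>
    w (p + ((0:ℂ) + ((1:ℝ):ℂ) * Complex.exp (θ * Complex.I)) • b, q) with hgdef
  have hgcont : Continuous g := by
    apply hcw.comp_continuous (by fun_prop)
    intro θ
    exact hmemcl _ (subset_closure (hcircU θ)) q hqcl
  have hgneg : ∀ θ, g θ < 0 := by
    intro θ
    apply hwn
    refine ⟨hmemcl _ (subset_closure (hcircU θ)) q hqcl, ?_⟩
    simp only [Set.mem_singleton_iff, Prod.mk.injEq, not_and]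
    intro habs
    exfalso
    have hexp : ((0:ℂ) + ((1:ℝ):ℂ) * Complex.exp (θ * Complex.I)) ≠ 0 := by
      simpa using Complex.exp_ne_zero (θ * Complex.I)
    have hne : ((0:ℂ) + ((1:ℝ):ℂ) * Complex.exp (θ * Complex.I)) • b ≠ 0 :=
      smul_ne_zero hexp hbne
    apply hne
    have := congrArg (fun z => z - p) habs
    simpa [add_sub_cancel_left] using this
  obtain ⟨θ₀, hθ₀mem, hθ₀max⟩ :=
    (isCompact_Icc (a := (0:ℝ)) (b := 2 * Real.pi)).exists_isMaxOn
      (Set.nonempty_Icc.2 (by positivity)) hgcont.continuousOn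
  have hInt : (∫ θ in (0:ℝ)..(2 * Real.pi), g θ) ≤ (2 * Real.pi) * g θ₀ := by
    have := intervalIntegral.integral_mono_on (μ := MeasureTheory.volume) (a := (0:ℝ))
      (b := 2 * Real.pi) (by positivity) (hgcont.intervalIntegrable _ _)
      (intervalIntegrable_const (c := g θ₀)) (fun θ hθ => hθ₀max hθ)
    simpa [smul_eq_mul, mul_comm] using this
  have : (2 * Real.pi)⁻¹ * ∫ θ in (0:ℝ)..(2 * Real.pi), g θ ≤ g θ₀ := by
    calc (2 * Real.pi)⁻¹ * ∫ θ in (0:ℝ)..(2 * Real.pi), g θ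
        ≤ (2 * Real.pi)⁻¹ * ((2 * Real.pi) * g θ₀) := by
          apply mul_le_mul_of_nonneg_left hInt (by positivity)
      _ = g θ₀ := by field_simp
  have h0 := hineq
  rw [hlhs] at h0
  have hg0 : g θ₀ < 0 := hgneg θ₀
  linarith [h0.trans this]

end Mixed2

section Exists

/-- Every bounded nonempty open set in `ℂⁿ` (`n ≥ 1`) has a strongly regular
boundary point (take a point of maximal Euclidean norm). -/
lemma exists_stronglyRegular {n : ℕ} (hn : 0 < n) {D : Set (Fin n → ℂ)}
    (hDo : IsOpen D) (hne : D.Nonempty) (hDb : Bornology.IsBounded D) :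
    ∃ x, StronglyRegular D x := by
  classical
  set g : (Fin n → ℂ) → ℝ := fun x => ∑ i, Complex.normSq (x i) with hgdef
  have hgcont : Continuous g := by
    apply continuous_finset_sum
    intro i _
    exact Complex.continuous_normSq.comp (continuous_apply i)
  have hgnonneg : ∀ x, 0 ≤ g x := fun x => Finset.sum_nonneg fun i _ => Complex.normSq_nonneg _
  have hgzero : ∀ x, g x = 0 → x = 0 := by
    intro x hx
    funext i
    have : Complex.normSq (x i) = 0 := by
      have := (Finset.sum_eq_zero_iff_of_nonneg
        (fun i _ => Complex.normSq_nonneg (x i))).1 hx i (Finset.mem_univ i)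
      exact this
    simpa using Complex.normSq_eq_zero.1 this
  obtain ⟨x₀, hx₀cl, hx₀max⟩ :=
    hDb.isCompact_closure.exists_isMaxOn hne.closure hgcont.continuousOn
  -- D contains a point with positive g
  obtain ⟨z, hz⟩ := hne
  obtain ⟨δ, hδ, hballz⟩ := Metric.isOpen_iff.1 hDo z hz
  set e : Fin n → ℂ := fun _ => 1 with hedef
  have hz' : z + (δ/2) • e ∈ D := by
    apply hballz
    rw [Metric.mem_ball]
    have h1 : dist (z + (δ/2) • e) z = ‖(δ/2) • e‖ := by
      rw [dist_eq_norm]; congr 1; abel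
    rw [h1]
    have : ‖(δ/2) • e‖ ≤ δ/2 := by
      rw [pi_norm_le_iff_of_nonneg (by positivity)]
      intro i
      simp [hedef, Pi.smul_apply, norm_smul, abs_of_pos (by positivity : (0:ℝ) < δ/2),
        abs_of_pos hδ]
    linarith
  have hpos : ∃ x1 ∈ D, 0 < g x1 := by
    rcases eq_or_ne z 0 with rfl | hzne
    · refine ⟨0 + (δ/2) • e, hz', ?_⟩
      have : ((0 : Fin n → ℂ) + (δ/2) • e) ⟨0, hn⟩ = ((δ/2 : ℝ) : ℂ) := by
        simp [hedef, Complex.real_smul]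
      apply Finset.sum_pos' (fun i _ => Complex.normSq_nonneg _) ⟨⟨0, hn⟩, Finset.mem_univ _, ?_⟩
      rw [this]
      simp only [Complex.normSq_ofReal]
      positivity
    · refine ⟨z, hz, ?_⟩
      rcases (hgnonneg z).lt_or_eq with h | h
      · exact h
      · exact absurd (hgzero z h.symm) hzne
  obtain ⟨x1, hx1D, hx1pos⟩ := hpos
  have hgx₀pos : 0 < g x₀ := lt_of_lt_of_le hx1pos (hx₀max (subset_closure hx1D))
  have hx₀ne : x₀ ≠ 0 := fun h => by rw [h] at hgx₀pos; simp [hgdef] at hgx₀pos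
  -- x₀ is not in D (else scaling increases g)
  have hx₀notD : x₀ ∉ D := by
    intro hmem
    obtain ⟨δ', hδ', hball⟩ := Metric.isOpen_iff.1 hDo x₀ hmem
    have hnorm : 0 < ‖x₀‖ := norm_pos_iff.2 hx₀ne
    set c : ℝ := 1 + δ' / (2 * ‖x₀‖) with hcdef
    have hc1 : 1 < c := by
      rw [hcdef]; have : 0 < δ' / (2 * ‖x₀‖) := by positivity
      linarith
    have hmem' : c • x₀ ∈ D := by
      apply hball
      rw [Metric.mem_ball]
      have : c • x₀ - x₀ = (c - 1) • x₀ := by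
        rw [sub_smul, one_smul]
      rw [dist_eq_norm, this, norm_smul, Real.norm_eq_abs, abs_of_pos (by linarith)]
      rw [hcdef]
      have h2 : (1 + δ' / (2 * ‖x₀‖) - 1) * ‖x₀‖ = δ' / 2 := by
        field_simp; ring
      rw [h2]; linarith
    have hval : g (c • x₀) = c^2 * g x₀ := by
      rw [hgdef]
      simp only [Pi.smul_apply, Finset.mul_sum]
      apply Finset.sum_congr rfl
      intro i _
      rw [Complex.real_smul, Complex.normSq_mul, Complex.normSq_ofReal]
      ring
    have hle : g (c • x₀) ≤ g x₀ := hx₀max (subset_closure hmem')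
    rw [hval] at hle
    have hc2 : 1 < c^2 := by nlinarith
    nlinarith [mul_lt_mul_of_pos_right hc2 hgx₀pos]
  have hx₀fr : x₀ ∈ frontier D := by
    rw [frontier, Set.mem_diff]
    exact ⟨hx₀cl, fun h => hx₀notD (interior_subset h)⟩
  -- the linear peak function
  set h : (Fin n → ℂ) → ℂ := fun x => ∑ i, x i * (starRingEnd ℂ) (x₀ i) with hhdef
  have hhlin : ∀ (a b : Fin n → ℂ) (t : ℂ), h (a + t • b) = h a + t * h b := by
    intro a b t
    rw [hhdef]
    simp only [Pi.add_apply, Pi.smul_apply, smul_eq_mul, add_mul, Finset.sum_add_distrib,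
      Finset.mul_sum]
    congr 1
    apply Finset.sum_congr rfl
    intro i _; ring
  have hhcont : Continuous h := by
    apply continuous_finset_sum
    intro i _
    exact (continuous_apply i).mul continuous_const
  set u : (Fin n → ℂ) → ℝ := fun x => (h x).re - g x₀ with hudef
  have hucont : Continuous u := (Complex.continuous_re.comp hhcont).sub continuous_const
  have hhre : ∀ x, (h x).re = ∑ i, (x i * (starRingEnd ℂ) (x₀ i)).re := by
    intro x; rw [hhdef]; exact Complex.re_sum _ _
  have hu0 : u x₀ = 0 := by
    rw [hudef]
    simp only
    rw [hhre]
    have : ∀ i ∈ Finset.univ, (x₀ i * (starRingEnd ℂ) (x₀ i)).re = Complex.normSq (x₀ i) := by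
      intro i _
      rw [Complex.mul_conj]
      simp
    rw [Finset.sum_congr rfl this]
    simp [hgdef]
  have hkey : ∀ x, 2 * (h x).re = g x + g x₀ - ∑ i, Complex.normSq (x i - x₀ i) := by
    intro x
    rw [hhre, hgdef]
    simp only [Finset.mul_sum]
    rw [← Finset.sum_add_distrib, ← Finset.sum_sub_distrib]
    apply Finset.sum_congr rfl
    intro i _
    have := Complex.normSq_sub (x i) (x₀ i)
    linarith
  have huneg : ∀ x ∈ closure D \ {x₀}, u x < 0 := by
    rintro x ⟨hxcl, hxne⟩
    have hS : 0 < ∑ i, Complex.normSq (x i - x₀ i) := by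
      have hxne' : x ≠ x₀ := hxne
      have : ∃ i, x i ≠ x₀ i := by
        by_contra hc
        push_neg at hc
        exact hxne' (funext hc)
      obtain ⟨i, hi⟩ := this
      apply Finset.sum_pos' (fun j _ => Complex.normSq_nonneg _)
      exact ⟨i, Finset.mem_univ _, Complex.normSq_pos.2 (sub_ne_zero.2 hi)⟩
    have hgle : g x ≤ g x₀ := hx₀max hxcl
    have := hkey x
    rw [hudef]
    simp only
    linarith
  refine ⟨x₀, hx₀fr, u, hucont.continuousOn, ⟨hucont.continuousOn.upperSemicontinuousOn, ?_⟩,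
    hu0, huneg⟩
  intro a b
  have : (fun t : ℂ => u (a + t • b)) = fun t : ℂ => (h a + t * h b).re - g x₀ := by
    funext t
    rw [hudef]
    simp only
    rw [hhlin]
  rw [this]
  exact subharmonicOn_re_affine (h a) (h b) (g x₀) _

end Exists

section Degenerate

variable {E F : Type*} [NormedAddCommGroup E] [NormedSpace ℂ E]
  [NormedAddCommGroup F] [NormedSpace ℂ F]

lemma stronglyRegular_univ_prod [Subsingleton E] {V : Set F} (p : E) (q : F) :
    StronglyRegular ((Set.univ : Set E) ×ˢ V) (p, q) ↔ StronglyRegular V q := by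
  constructor
  · rintro ⟨hfr, w, hcw, hpw, hw0, hwn⟩
    rw [frontier_univ_prod_eq] at hfr
    have hclpr : closure ((Set.univ : Set E) ×ˢ V) = (Set.univ : Set E) ×ˢ closure V := by
      rw [closure_prod_eq, closure_univ]
    refine ⟨hfr.2, fun z => w (p, z), ?_, ⟨?_, ?_⟩, hw0, ?_⟩
    · apply hcw.comp (Continuous.continuousOn (by fun_prop))
      intro z hz; rw [hclpr]; exact ⟨trivial, hz⟩
    · have : ContinuousOn (fun z => w (p, z)) V := by
        apply (hcw.mono subset_closure).comp (Continuous.continuousOn (by fun_prop))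
        intro z hz; exact ⟨trivial, hz⟩
      exact this.upperSemicontinuousOn
    · intro a b
      refine ((hpw.2 (p, a) (p, b)).congr'
        (g := fun t : ℂ => w (p, a + t • b)) (s' := {t : ℂ | a + t • b ∈ V})
        (fun t => congrArg w (Prod.ext (Subsingleton.elim _ _) rfl))
        ?_)
      ext t
      simp only [Set.mem_setOf_eq, Set.mem_prod, Set.mem_univ, true_and]
      rfl
    · intro z hz
      apply hwn
      refine ⟨by rw [hclpr]; exact ⟨trivial, hz.1⟩, ?_⟩
      simp only [Set.mem_singleton_iff, Prod.mk.injEq, not_and]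
      intro _; exact hz.2
  · rintro ⟨hfr, v, hcv, hpv, hv0, hvn⟩
    have hclpr : closure ((Set.univ : Set E) ×ˢ V) = (Set.univ : Set E) ×ˢ closure V := by
      rw [closure_prod_eq, closure_univ]
    refine ⟨by rw [frontier_univ_prod_eq]; exact ⟨trivial, hfr⟩,
      fun x => v x.2, ?_, ⟨?_, ?_⟩, hv0, ?_⟩
    · rw [hclpr]
      exact hcv.comp continuous_snd.continuousOn (fun x hx => hx.2)
    · exact ((hcv.mono subset_closure).comp continuous_snd.continuousOn
        (fun x hx => hx.2)).upperSemicontinuousOn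
    · intro a b
      refine ((hpv.2 a.2 b.2).congr'
        (g := fun t : ℂ => v ((a + t • b).2)) (s' := {t : ℂ | a + t • b ∈ (Set.univ : Set E) ×ˢ V})
        (fun t => rfl) ?_)
      ext t
      simp only [Set.mem_setOf_eq, Set.mem_prod, Set.mem_univ, true_and]
      rfl
    · rintro ⟨x, z⟩ hz
      rw [hclpr] at hz
      apply hvn
      refine ⟨hz.1.2, fun hzq => ?_⟩
      apply hz.2
      simp only [Set.mem_singleton_iff, Prod.mk.injEq]
      exact ⟨Subsingleton.elim _ _, hzq⟩
  
lemma stronglyRegular_prod_univ [Subsingleton F] {U : Set E} (p : E) (q : F) :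
    StronglyRegular (U ×ˢ (Set.univ : Set F)) (p, q) ↔ StronglyRegular U p := by
  constructor
  · rintro ⟨hfr, w, hcw, hpw, hw0, hwn⟩
    rw [frontier_prod_univ_eq] at hfr
    have hclpr : closure (U ×ˢ (Set.univ : Set F)) = closure U ×ˢ (Set.univ : Set F) := by
      rw [closure_prod_eq, closure_univ]
    refine ⟨hfr.1, fun x => w (x, q), ?_, ⟨?_, ?_⟩, hw0, ?_⟩
    · apply hcw.comp (Continuous.continuousOn (by fun_prop))
      intro x hx; rw [hclpr]; exact ⟨hx, trivial⟩
    · have : ContinuousOn (fun x => w (x, q)) U := by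
        apply (hcw.mono subset_closure).comp (Continuous.continuousOn (by fun_prop))
        intro x hx; exact ⟨hx, trivial⟩
      exact this.upperSemicontinuousOn
    · intro a b
      refine ((hpw.2 (a, q) (b, q)).congr'
        (g := fun t : ℂ => w (a + t • b, q)) (s' := {t : ℂ | a + t • b ∈ U})
        (fun t => congrArg w (Prod.ext rfl (Subsingleton.elim _ _)))
        ?_)
      ext t
      simp only [Set.mem_setOf_eq, Set.mem_prod, Set.mem_univ, and_true]
      rfl
    · intro x hx
      apply hwn
      refine ⟨by rw [hclpr]; exact ⟨hx.1, trivial⟩, ?_⟩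
      simp only [Set.mem_singleton_iff, Prod.mk.injEq, not_and]
      intro hxp; exact absurd hxp hx.2
  · rintro ⟨hfr, u, hcu, hpu, hu0, hun⟩
    have hclpr : closure (U ×ˢ (Set.univ : Set F)) = closure U ×ˢ (Set.univ : Set F) := by
      rw [closure_prod_eq, closure_univ]
    refine ⟨by rw [frontier_prod_univ_eq]; exact ⟨hfr, trivial⟩,
      fun x => u x.1, ?_, ⟨?_, ?_⟩, hu0, ?_⟩
    · rw [hclpr]
      exact hcu.comp continuous_fst.continuousOn (fun x hx => hx.1)
    · exact ((hcu.mono subset_closure).comp continuous_fst.continuousOn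
        (fun x hx => hx.1)).upperSemicontinuousOn
    · intro a b
      refine ((hpu.2 a.1 b.1).congr'
        (g := fun t : ℂ => u ((a + t • b).1)) (s' := {t : ℂ | a + t • b ∈ U ×ˢ (Set.univ : Set F)})
        (fun t => rfl) ?_)
      ext t
      simp only [Set.mem_setOf_eq, Set.mem_prod, Set.mem_univ, and_true]
      rfl
    · rintro ⟨x, z⟩ hz
      rw [hclpr] at hz
      apply hun
      refine ⟨hz.1.1, fun hxp => ?_⟩
      apply hz.2
      simp only [Set.mem_singleton_iff, Prod.mk.injEq]
      exact ⟨hxp, Subsingleton.elim _ _⟩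

end Degenerate


/-- the strongly regular points of `∂(U × V)` form a closed set iff the
strongly regular points of `∂U` and of `∂V` form closed sets.  (Since the sets of
strongly regular points are contained in the frontiers, which are closed, relative
closedness in the boundary is equivalent to closedness.) -/
theorem stronglyRegular_product_closed_iff
    {n m : ℕ} (U : Set (Fin n → ℂ)) (V : Set (Fin m → ℂ))
    (hUo : IsOpen U) (hUc : IsConnected U) (hUb : Bornology.IsBounded U)
    (hVo : IsOpen V) (hVc : IsConnected V) (hVb : Bornology.IsBounded V) :
    IsClosed {x : (Fin n → ℂ) × (Fin m → ℂ) | StronglyRegular (U ×ˢ V) x} ↔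
      IsClosed {z : Fin n → ℂ | StronglyRegular U z} ∧
      IsClosed {w : Fin m → ℂ | StronglyRegular V w} := by
  rcases Nat.eq_zero_or_pos n with hn | hn
  · subst hn
    haveI : Subsingleton (Fin 0 → ℂ) := ⟨fun f g => funext fun i => i.elim0⟩
    have hUuniv : U = Set.univ := by
      obtain ⟨z, hz⟩ := hUc.nonempty
      apply Set.eq_univ_of_forall
      intro x; rwa [Subsingleton.elim x z]
    subst hUuniv
    have hA : {z : Fin 0 → ℂ | StronglyRegular Set.univ z} = ∅ := by
      ext z
      simp only [Set.mem_setOf_eq, Set.mem_empty_iff_false, iff_false]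
      rintro ⟨hfr, -⟩
      rw [frontier_univ] at hfr
      exact hfr
    have hprod : {x : (Fin 0 → ℂ) × (Fin m → ℂ) | StronglyRegular (Set.univ ×ˢ V) x}
        = Prod.snd ⁻¹' {w : Fin m → ℂ | StronglyRegular V w} := by
      ext ⟨p, q⟩
      exact stronglyRegular_univ_prod p q
    rw [hprod, hA]
    constructor
    · intro hcl
      refine ⟨isClosed_empty, ?_⟩
      have heq : {w : Fin m → ℂ | StronglyRegular V w} =
          (fun w : Fin m → ℂ => ((0 : Fin 0 → ℂ), w)) ⁻¹'
            (Prod.snd ⁻¹' {w : Fin m → ℂ | StronglyRegular V w}) := rfl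
      rw [heq]
      exact hcl.preimage (by fun_prop)
    · rintro ⟨-, hcl⟩
      exact hcl.preimage continuous_snd
  · rcases Nat.eq_zero_or_pos m with hm | hm
    · subst hm
      haveI : Subsingleton (Fin 0 → ℂ) := ⟨fun f g => funext fun i => i.elim0⟩
      have hVuniv : V = Set.univ := by
        obtain ⟨z, hz⟩ := hVc.nonempty
        apply Set.eq_univ_of_forall
        intro x; rwa [Subsingleton.elim x z]
      subst hVuniv
      have hB : {w : Fin 0 → ℂ | StronglyRegular Set.univ w} = ∅ := by
        ext z
        simp only [Set.mem_setOf_eq, Set.mem_empty_iff_false, iff_false]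
        rintro ⟨hfr, -⟩
        rw [frontier_univ] at hfr
        exact hfr
      have hprod : {x : (Fin n → ℂ) × (Fin 0 → ℂ) | StronglyRegular (U ×ˢ Set.univ) x}
          = Prod.fst ⁻¹' {z : Fin n → ℂ | StronglyRegular U z} := by
        ext ⟨p, q⟩
        exact stronglyRegular_prod_univ p q
      rw [hprod, hB]
      constructor
      · intro hcl
        refine ⟨?_, isClosed_empty⟩
        have heq : {z : Fin n → ℂ | StronglyRegular U z} =
            (fun z : Fin n → ℂ => (z, (0 : Fin 0 → ℂ))) ⁻¹'
              (Prod.fst ⁻¹' {z : Fin n → ℂ | StronglyRegular U z}) := rfl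
        rw [heq]
        exact hcl.preimage (by fun_prop)
      · rintro ⟨hcl, -⟩
        exact hcl.preimage continuous_fst
    · have key : ∀ p q, StronglyRegular (U ×ˢ V) (p, q) ↔
          StronglyRegular U p ∧ StronglyRegular V q := by
        intro p q
        constructor
        · intro h
          have hfr := h.1
          have hcl := frontier_subset_closure hfr
          rw [closure_prod_eq] at hcl
          have hpU : p ∉ U := fun hpU =>
            not_stronglyRegular_mixed_right hUb hVb hn hUo hpU h
          have hqV : q ∉ V := fun hqV =>
            not_stronglyRegular_mixed_left hUb hVb hm hVo hqV h
          have hpfr : p ∈ frontier U := ⟨hcl.1, by rwa [hUo.interior_eq]⟩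
          have hqfr : q ∈ frontier V := ⟨hcl.2, by rwa [hVo.interior_eq]⟩
          exact ⟨stronglyRegular_left hUb hVb hpfr hcl.2 h,
            stronglyRegular_right hUb hVb hcl.1 hqfr h⟩
        · rintro ⟨h1, h2⟩
          exact stronglyRegular_prod h1 h2
      have hseteq : {x : (Fin n → ℂ) × (Fin m → ℂ) | StronglyRegular (U ×ˢ V) x}
          = {z : Fin n → ℂ | StronglyRegular U z} ×ˢ {w : Fin m → ℂ | StronglyRegular V w} := by
        ext ⟨p, q⟩
        simpa [Set.mem_prod] using key p q
      obtain ⟨p₀, hp₀⟩ := exists_stronglyRegular hn hUo hUc.nonempty hUb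
      obtain ⟨q₀, hq₀⟩ := exists_stronglyRegular hm hVo hVc.nonempty hVb
      rw [hseteq]
      constructor
      · intro hcl
        constructor
        · have heq : {z : Fin n → ℂ | StronglyRegular U z} = (fun z : Fin n → ℂ => (z, q₀)) ⁻¹'
              ({z : Fin n → ℂ | StronglyRegular U z} ×ˢ {w : Fin m → ℂ | StronglyRegular V w}) := by
            ext z
            simp [Set.mem_prod, hq₀]
          rw [heq]
          exact hcl.preimage (by fun_prop)
        · have heq : {w : Fin m → ℂ | StronglyRegular V w} = (fun w : Fin m → ℂ => (p₀, w)) ⁻¹'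
              ({z : Fin n → ℂ | StronglyRegular U z} ×ˢ {w : Fin m → ℂ | StronglyRegular V w}) := by
            ext w
            simp [Set.mem_prod, hp₀]
          rw [heq]
          exact hcl.preimage (by fun_prop)
      · rintro ⟨h1, h2⟩
        exact h1.prod h2
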